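/- Let n ≥ 1 and h = x₁² + x₂² + ⋯ + xₙ². For every ε > 0, the identity x₁ + ε = ε·(1 + x₁/(2ε))² + (1/(4ε))·(x₂² + ⋯ + xₙ²) − (1/(4ε))·h holds; consequently, for the problem of minimizing x₁ subject to h(x) = 0, the Lasserre bound satisfies f_k = sup{γ ∈ ℝ : x₁ − γ ∈ ⟨h⟩_{2k} + Σ_{2k}} = 0 = f_min for every k ≥ 1, but this supremum is not attained for any k (there is no SOS σ and polynomial φ with x₁ = σ + φ·h). -/

import Mathlib

open MvPolynomial Pointwise

/-- A polynomial is a sum of squares. -/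
def IsSOS {n : ℕ} (p : MvPolynomial (Fin n) ℝ) : Prop :=
  ∃ (m : ℕ) (q : Fin m → MvPolynomial (Fin n) ℝ), p = ∑ i, q i ^ 2

/-- The `2k`-th truncated ideal generated by the tuple `h`. -/
def truncIdeal {n m : ℕ} (h : Fin m → MvPolynomial (Fin n) ℝ) (k : ℕ) :
    Set (MvPolynomial (Fin n) ℝ) :=
  {p | ∃ φ : Fin m → MvPolynomial (Fin n) ℝ,
    (∀ i, (φ i * h i).totalDegree ≤ 2 * k) ∧ p = ∑ i, φ i * h i}

/-- The `k`-th truncated quadratic module generated by the tuple `g` (with `g₀ = 1`). -/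
def truncQM {n m : ℕ} (g : Fin m → MvPolynomial (Fin n) ℝ) (k : ℕ) :
    Set (MvPolynomial (Fin n) ℝ) :=
  {p | ∃ σ : Fin (m + 1) → MvPolynomial (Fin n) ℝ,
    (∀ j, IsSOS (σ j) ∧
      (σ j * (Fin.cons 1 g : Fin (m + 1) → MvPolynomial (Fin n) ℝ) j).totalDegree ≤ 2 * k) ∧
    p = ∑ j, σ j * (Fin.cons 1 g : Fin (m + 1) → MvPolynomial (Fin n) ℝ) j}

/-- The feasible set `K` of the problem `h = 0, g ≥ 0`. -/
def feasSet {n m₁ m₂ : ℕ} (h : Fin m₁ → MvPolynomial (Fin n) ℝ)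
    (g : Fin m₂ → MvPolynomial (Fin n) ℝ) : Set (Fin n → ℝ) :=
  {x | (∀ i, eval x (h i) = 0) ∧ ∀ j, 0 ≤ eval x (g j)}

/-- The real variety `V_ℝ(h)`. -/
def realVariety {n m : ℕ} (h : Fin m → MvPolynomial (Fin n) ℝ) : Set (Fin n → ℝ) :=
  {x | ∀ i, eval x (h i) = 0}

/-- The vanishing ideal `I(S)` of a set `S ⊆ ℝⁿ`. -/
def vanishIdeal {n : ℕ} (S : Set (Fin n → ℝ)) : Set (MvPolynomial (Fin n) ℝ) :=
  {p | ∀ u ∈ S, eval u p = 0}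

/-- The `k`-th Lasserre bound `f_k` (an extended real). -/
noncomputable def lasserreBound {n m₁ m₂ : ℕ} (f : MvPolynomial (Fin n) ℝ)
    (h : Fin m₁ → MvPolynomial (Fin n) ℝ) (g : Fin m₂ → MvPolynomial (Fin n) ℝ)
    (k : ℕ) : EReal :=
  sSup {γ : EReal | ∃ r : ℝ, γ = (r : EReal) ∧ f - C r ∈ truncIdeal h k + truncQM g k}

/-- `f_min`, the infimum of `f` over `K`, as an extended real (`⊤` if `K = ∅`). -/
noncomputable def fMin {n : ℕ} (f : MvPolynomial (Fin n) ℝ) (K : Set (Fin n → ℝ)) : EReal :=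
  ⨅ x ∈ K, (eval x f : EReal)

/-- The set of SOS polynomials of degree at most `2k`. -/
def sigma2k {n : ℕ} (k : ℕ) : Set (MvPolynomial (Fin n) ℝ) :=
  {p | IsSOS p ∧ p.totalDegree ≤ 2 * k}

/-- The `k`-th Lasserre bound for minimizing `f` subject to `h = 0`
(no inequality constraints). -/
noncomputable def lasserreEqBound {n m : ℕ} (f : MvPolynomial (Fin n) ℝ)
    (h : Fin m → MvPolynomial (Fin n) ℝ) (k : ℕ) : EReal :=
  sSup {γ : EReal | ∃ r : ℝ, γ = (r : EReal) ∧ f - C r ∈ truncIdeal h k + sigma2k k}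

/-- For minimizing `x₁` subject to `x₁² + ⋯ + xₙ² = 0`: the explicit ε-identity
holds, the Lasserre bound satisfies `f_k = 0 = f_min` for all `k ≥ 1`, yet the
supremum is never attained: there are no SOS `σ` and polynomial `φ` with
`x₁ = σ + φ·(x₁² + ⋯ + xₙ²)`. -/
-- SOS evals nonneg
lemma sos_eval_nonneg {n : ℕ} {p : MvPolynomial (Fin n) ℝ} (h : IsSOS p) (x : Fin n → ℝ) :
    0 ≤ eval x p := by
  obtain ⟨m, q, rfl⟩ := h
  rw [map_sum]
  exact Finset.sum_nonneg fun i _ => by rw [map_pow]; positivity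

lemma deg_sum_sq {n : ℕ} (s : Finset (Fin n)) :
    (∑ i ∈ s, (X i : MvPolynomial (Fin n) ℝ) ^ 2).totalDegree ≤ 2 := by
  apply le_trans (totalDegree_finset_sum _ _)
  apply Finset.sup_le
  intro i _
  rw [totalDegree_X_pow]

theorem lasserre_value_attained_never {n : ℕ} (hn : 0 < n) :
    (∀ ε : ℝ, 0 < ε →
      X ⟨0, hn⟩ + C ε =
        C ε * (1 + C (1 / (2 * ε)) * X ⟨0, hn⟩) ^ 2 +
          C (1 / (4 * ε)) * (∑ i ∈ Finset.univ.erase (⟨0, hn⟩ : Fin n), X i ^ 2) -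
          C (1 / (4 * ε)) * (∑ i : Fin n, X i ^ 2)) ∧
    (∀ k : ℕ, 1 ≤ k →
      lasserreEqBound (X ⟨0, hn⟩) (fun _ : Fin 1 => ∑ i : Fin n, X i ^ 2) k
        = (0 : EReal)) ∧
    fMin (X ⟨0, hn⟩) (realVariety (fun _ : Fin 1 => ∑ i : Fin n, X i ^ 2)) = (0 : EReal) ∧
    ¬ ∃ (σ φ : MvPolynomial (Fin n) ℝ), IsSOS σ ∧
        X ⟨0, hn⟩ = σ + φ * (∑ i : Fin n, X i ^ 2) := by
  refine ⟨fun ε hε => ?_, fun k hk => ?_, ?_, ?_⟩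
  have hsum : (∑ i : Fin n, (X i : MvPolynomial (Fin n) ℝ) ^ 2)
      = X ⟨0, hn⟩ ^ 2 + ∑ i ∈ Finset.univ.erase (⟨0, hn⟩ : Fin n), X i ^ 2 :=
    (Finset.add_sum_erase _ _ (Finset.mem_univ _)).symm
  rw [hsum]
  have h1 : (C ε : MvPolynomial (Fin n) ℝ) * C (1 / (2 * ε)) = C (1/2) := by
    rw [← C_mul]; congr 1; field_simp
  have h2 : (C ε : MvPolynomial (Fin n) ℝ) * C (1 / (2 * ε)) ^ 2 = C (1 / (4 * ε)) := by
    rw [← C_pow, ← C_mul]; congr 1; field_simp; ring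
  have h3 : (C (1/2) : MvPolynomial (Fin n) ℝ) + C (1/2) = 1 := by
    rw [← C_add, ← C_1]; norm_num
  linear_combination (-2 * X ⟨0, hn⟩) * h1 + (-X ⟨0, hn⟩ ^ 2) * h2 - X ⟨0, hn⟩ * h3
  have h2k : 2 ≤ 2 * k := by omega
  apply le_antisymm
  · -- sSup ≤ 0
    apply sSup_le
    rintro γ ⟨r, rfl, hmem⟩
    rw [Set.mem_add] at hmem
    obtain ⟨a, ha, b, hb, hab⟩ := hmem
    obtain ⟨φ, -, rfl⟩ := ha
    have h0 := congrArg (eval (0 : Fin n → ℝ)) hab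
    simp only [map_sub, map_sum, map_mul, eval_X, eval_C, map_pow] at h0
    have hbnn := sos_eval_nonneg hb.1 (0 : Fin n → ℝ)
    have hr : r ≤ 0 := by
      have : (0:ℝ) - r = ∑ i : Fin 1, eval 0 (φ i) * (∑ i : Fin n, (0:ℝ) ^ 2) + eval 0 b := by
        simpa using h0.symm
      simp at this
      have h4 : (eval (0 : Fin n → ℝ)) b = constantCoeff b := RingHom.congr_fun MvPolynomial.eval_zero b
      rw [h4] at hbnn
      linarith
    exact_mod_cast hr
  · -- 0 ≤ sSup
    rw [lasserreEqBound, le_sSup_iff]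
    intro c hc
    by_contra hlt
    push_neg at hlt
    obtain ⟨x, hcx, hx0⟩ := EReal.exists_between_coe_real hlt
    have hxneg : x < 0 := by exact_mod_cast hx0
    have hmem : ((x : ℝ) : EReal) ∈ {γ : EReal | ∃ r : ℝ, γ = (r : EReal) ∧
        X ⟨0, hn⟩ - C r ∈ truncIdeal (fun _ : Fin 1 => ∑ i : Fin n, X i ^ 2) k + sigma2k k} := by
      refine ⟨x, rfl, ?_⟩
      set ε : ℝ := -x with hε
      have hεpos : 0 < ε := by simp [hε]; linarith
      rw [Set.mem_add]
      refine ⟨C (-(1 / (4 * ε))) * (∑ i : Fin n, X i ^ 2), ?_,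
        C ε * (1 + C (1 / (2 * ε)) * X ⟨0, hn⟩) ^ 2 +
          C (1 / (4 * ε)) * (∑ i ∈ Finset.univ.erase (⟨0, hn⟩ : Fin n), X i ^ 2), ?_, ?_⟩
      · refine ⟨fun _ => C (-(1 / (4 * ε))), fun i => ?_, by simp⟩
        calc ((C (-(1 / (4 * ε))) : MvPolynomial (Fin n) ℝ) * ∑ i : Fin n, X i ^ 2).totalDegree
            ≤ (C (-(1 / (4 * ε))) : MvPolynomial (Fin n) ℝ).totalDegree
              + (∑ i : Fin n, (X i : MvPolynomial (Fin n) ℝ) ^ 2).totalDegree :=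
              totalDegree_mul _ _
          _ ≤ 0 + 2 := by
              exact add_le_add (le_of_eq (totalDegree_C _)) (deg_sum_sq _)
          _ ≤ 2 * k := by omega
      · constructor
        · -- IsSOS
          refine ⟨n, fun i => if i = ⟨0, hn⟩ then C (Real.sqrt ε) * (1 + C (1 / (2 * ε)) * X ⟨0, hn⟩)
            else C (1 / (2 * Real.sqrt ε)) * X i, ?_⟩
          have hsq : Real.sqrt ε ^ 2 = ε := Real.sq_sqrt hεpos.le
          rw [← Finset.add_sum_erase _ _ (Finset.mem_univ (⟨0, hn⟩ : Fin n))]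
          beta_reduce
          rw [if_pos rfl, Finset.mul_sum]
          congr 1
          · rw [mul_pow, ← C_pow, hsq]
          · refine Finset.sum_congr rfl fun i hi => ?_
            rw [if_neg (Finset.ne_of_mem_erase hi), mul_pow, ← C_pow]
            congr 2
            rw [div_pow, mul_pow, hsq]
            norm_num
        · -- degree ≤ 2k
          have hd1 : (1 + C (1 / (2 * ε)) * X (⟨0, hn⟩ : Fin n) : MvPolynomial (Fin n) ℝ).totalDegree ≤ 1 := by
            apply le_trans (totalDegree_add _ _)
            apply max_le
            · rw [← C_1, totalDegree_C]; omega
            · apply le_trans (totalDegree_mul _ _)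
              rw [totalDegree_C, totalDegree_X]
          have hd2 : ((1 + C (1 / (2 * ε)) * X (⟨0, hn⟩ : Fin n) : MvPolynomial (Fin n) ℝ) ^ 2).totalDegree ≤ 2 := by
            apply le_trans (totalDegree_pow _ _)
            omega
          have hd3 : ((C ε : MvPolynomial (Fin n) ℝ) * (1 + C (1 / (2 * ε)) * X (⟨0, hn⟩ : Fin n)) ^ 2).totalDegree ≤ 2 := by
            apply le_trans (totalDegree_mul _ _)
            rw [totalDegree_C]
            omega
          have hd4 : ((C (1 / (4 * ε)) : MvPolynomial (Fin n) ℝ)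
              * ∑ i ∈ Finset.univ.erase (⟨0, hn⟩ : Fin n), X i ^ 2).totalDegree ≤ 2 := by
            apply le_trans (totalDegree_mul _ _)
            rw [totalDegree_C]
            have := deg_sum_sq (Finset.univ.erase (⟨0, hn⟩ : Fin n))
            omega
          apply le_trans (totalDegree_add _ _)
          apply max_le <;> omega
      · -- the identity
        have hsum : (∑ i : Fin n, (X i : MvPolynomial (Fin n) ℝ) ^ 2)
            = X ⟨0, hn⟩ ^ 2 + ∑ i ∈ Finset.univ.erase (⟨0, hn⟩ : Fin n), X i ^ 2 :=
          (Finset.add_sum_erase _ _ (Finset.mem_univ _)).symm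
        rw [hsum]
        have h1 : (C ε : MvPolynomial (Fin n) ℝ) * C (1 / (2 * ε)) = C (1/2) := by
          rw [← C_mul]; congr 1; field_simp
        have h2 : (C ε : MvPolynomial (Fin n) ℝ) * C (1 / (2 * ε)) ^ 2 = C (1 / (4 * ε)) := by
          rw [← C_pow, ← C_mul]; congr 1; field_simp; ring
        have h3 : (C (1/2) : MvPolynomial (Fin n) ℝ) + C (1/2) = 1 := by
          rw [← C_add, ← C_1]; norm_num
        have hx : (C x : MvPolynomial (Fin n) ℝ) = - C ε := by
          rw [hε]; simp
        rw [hx]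
        rw [show (C (-(1 / (4 * ε))) : MvPolynomial (Fin n) ℝ) = - C (1 / (4 * ε)) from map_neg C _]
        linear_combination (2 * X ⟨0, hn⟩) * h1 + (X ⟨0, hn⟩ ^ 2) * h2 + X ⟨0, hn⟩ * h3
    exact absurd (hc hmem) (not_le.mpr hcx)
  have hK : realVariety (fun _ : Fin 1 => ∑ i : Fin n, X i ^ 2) = {0} := by
    ext x
    simp only [realVariety, Set.mem_setOf_eq, Set.mem_singleton_iff]
    constructor
    · intro h
      have := h 0
      simp only [map_sum, eval_X, map_pow] at this
      funext i
      have hi := (Finset.sum_eq_zero_iff_of_nonneg (fun j _ => sq_nonneg (x j))).mp this i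
        (Finset.mem_univ i)
      have := pow_eq_zero_iff (n := 2) (by norm_num) |>.mp hi
      simpa using this
    · rintro rfl i
      simp
  rw [hK]
  simp [fMin]
  rintro ⟨σ, φ, ⟨m, q, rfl⟩, heq⟩
  -- map to univariate polynomials
  set ψ : MvPolynomial (Fin n) ℝ →ₐ[ℝ] Polynomial ℝ :=
    aeval (fun i => if i = ⟨0, hn⟩ then Polynomial.X else 0) with hψ
  have hX : ψ (X ⟨0, hn⟩) = Polynomial.X := by simp [hψ]
  have hS : ψ (∑ i : Fin n, X i ^ 2) = Polynomial.X ^ 2 := by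
    simp only [hψ, map_sum, map_pow, aeval_X]
    rw [Finset.sum_eq_single (⟨0, hn⟩ : Fin n)]
    · simp
    · intro b _ hb; simp [hb]
    · simp
  have key : Polynomial.X = (∑ i, (ψ (q i)) ^ 2) + ψ φ * Polynomial.X ^ 2 := by
    have := congrArg ψ heq
    rw [hX, map_add, map_mul, hS, map_sum] at this
    simpa using this
  set Q : Fin m → Polynomial ℝ := fun i => ψ (q i)
  -- coeff 0
  have h0 : ∑ i, (Q i).eval 0 ^ 2 = 0 := by
    have := congrArg (Polynomial.eval 0) key
    simp only [Polynomial.eval_add, Polynomial.eval_mul, Polynomial.eval_pow,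
      Polynomial.eval_X, Polynomial.eval_finset_sum] at this
    simpa using this.symm
  have hz : ∀ i ∈ (Finset.univ : Finset (Fin m)), (Q i).eval 0 ^ 2 = 0 :=
    (Finset.sum_eq_zero_iff_of_nonneg (fun i _ => sq_nonneg ((Q i).eval 0))).mp h0
  have hdvd : (Polynomial.X ^ 2 : Polynomial ℝ) ∣ ∑ i, (Q i) ^ 2 := by
    apply Finset.dvd_sum
    intro i _
    have : Polynomial.X ∣ Q i := by
      rw [Polynomial.X_dvd_iff, Polynomial.coeff_zero_eq_eval_zero]
      exact pow_eq_zero_iff (n := 2) (by norm_num) |>.mp (hz i (Finset.mem_univ i))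
    exact pow_dvd_pow_of_dvd this 2
  have hdvdX : (Polynomial.X ^ 2 : Polynomial ℝ) ∣ Polynomial.X := by
    have h1 : (∑ i, (Q i) ^ 2) = Polynomial.X - ψ φ * Polynomial.X ^ 2 :=
      eq_sub_of_add_eq key.symm
    rw [h1] at hdvd
    have h2 : (Polynomial.X ^ 2 : Polynomial ℝ) ∣ ψ φ * Polynomial.X ^ 2 :=
      dvd_mul_left _ _
    simpa using dvd_add hdvd h2
  obtain ⟨r, hr⟩ := hdvdX
  have := congrArg (fun p => Polynomial.coeff p 1) hr
  simp [Polynomial.coeff_X_pow_mul] at this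
  rw [show (Polynomial.X^2 * r) = r * Polynomial.X ^ 2 by ring,
    Polynomial.coeff_mul_X_pow'] at this
  norm_num at this
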